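/- Let (X, μ) be a measure space with μ a finite measure satisfying 0 < μ(X) < ∞, let q ∈ (1, ∞) be a real number, and let C₁ ≥ 0 and ε > 0 be real. Then there exists C > 0 such that: for every measurable function v : X → ℝ with ∫_X |v|^q dμ < ∞, every real G ≥ 0 satisfying (∫_X |v|^q dμ)^{1/q} ≤ C₁ · G + μ(X)^{1/q − 1} · ∫_X |v| dμ, and every measurable set A ⊆ X with μ(A) > ε, one has (∫_X |v|^q dμ)^{1/q} ≤ C · (G + μ(A)⁻¹ · ∫_A |v| dμ). -/

import Mathlib

open MeasureTheory

/-- Abstract Poincaré inequality with averaged term: on a finite measure space of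
positive mass, if a function `v` with `∫ |v|^q < ∞` satisfies the classical
Poincaré inequality `‖v‖_q ≤ C₁ G + μ(X)^{1/q - 1} ∫ |v|`, then for any measurable
set `A` of measure greater than `ε` one has
`‖v‖_q ≤ C (G + μ(A)⁻¹ ∫_A |v|)`, with `C` depending only on `μ(X)`, `q`, `C₁`, `ε`. -/
theorem poincare_average {X : Type*} [MeasurableSpace X] (μ : Measure X) [IsFiniteMeasure μ]
    (hX : 0 < μ Set.univ) (q : ℝ) (hq : 1 < q) (C₁ : ℝ) (hC₁ : 0 ≤ C₁)
    (ε : ℝ) (hε : 0 < ε) :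
    ∃ C : ℝ, 0 < C ∧ ∀ (v : X → ℝ), Measurable v →
      Integrable (fun x => |v x| ^ q) μ →
      ∀ G : ℝ, 0 ≤ G →
      (∫ x, |v x| ^ q ∂μ) ^ (1 / q) ≤
        C₁ * G + (μ Set.univ).toReal ^ (1 / q - 1) * ∫ x, |v x| ∂μ →
      ∀ A : Set X, MeasurableSet A → ε < (μ A).toReal →
      (∫ x, |v x| ^ q ∂μ) ^ (1 / q) ≤
        C * (G + ((μ A).toReal)⁻¹ * ∫ x in A, |v x| ∂μ) := by
  have hq0 : (0:ℝ) < q := lt_trans one_pos hq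
  set m := (μ Set.univ).toReal with hm_def
  have hm : 0 < m := ENNReal.toReal_pos hX.ne' (measure_ne_top μ _)
  set ε' : ℝ := min ε m / 2 with hε'_def
  have hε'pos : 0 < ε' := div_pos (lt_min hε hm) two_pos
  have hε'le : ε' ≤ ε := by
    have h1 : min ε m ≤ ε := min_le_left _ _
    have := hε.le
    simp only [hε'_def]
    linarith
  have hε'lt : ε' < m := by
    have h1 : min ε m ≤ m := min_le_right _ _
    simp only [hε'_def]
    linarith
  have hexp : 0 < 1 - 1/q := by
    have : 1/q < 1 := by
      rw [div_lt_one hq0]; exact hq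
    linarith
  set θ : ℝ := ((m - ε') / m) ^ (1 - 1/q) with hθ_def
  have hbase0 : 0 < (m - ε') / m := div_pos (by linarith) hm
  have hbase1 : (m - ε') / m < 1 := (div_lt_one hm).mpr (by linarith)
  have hθ0 : 0 < θ := Real.rpow_pos_of_pos hbase0 _
  have hθ1 : θ < 1 := Real.rpow_lt_one hbase0.le hbase1 hexp
  have hS : 0 < C₁ + m ^ (1/q) + 1 := by
    have := Real.rpow_pos_of_pos hm (1/q)
    linarith
  refine ⟨(1 - θ)⁻¹ * (C₁ + m ^ (1/q) + 1),
    mul_pos (inv_pos.mpr (by linarith)) hS, ?_⟩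
  intro v hv hint G hG hP A hA hAε
  have hq0' : ENNReal.ofReal q ≠ 0 := by
    simp [ENNReal.ofReal_eq_zero, not_le, hq0]
  have hqt : ENNReal.ofReal q ≠ ⊤ := ENNReal.ofReal_ne_top
  -- Memℒp facts
  have hvq : MemLp v (ENNReal.ofReal q) μ := by
    have h1 : MemLp (fun x => ‖v x‖ ^ (ENNReal.ofReal q).toReal)
        (ENNReal.ofReal q / ENNReal.ofReal q) μ := by
      rw [ENNReal.div_self hq0' hqt, ENNReal.toReal_ofReal hq0.le,
        memLp_one_iff_integrable]
      simpa [Real.norm_eq_abs] using hint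
    exact (memLp_norm_rpow_iff hv.aestronglyMeasurable hq0' hqt).mp h1
  have hvabs : MemLp (fun x => |v x|) (ENNReal.ofReal q) μ := by
    simpa [Real.norm_eq_abs] using hvq.norm
  have hv1 : Integrable v μ :=
    memLp_one_iff_integrable.mp
      (hvq.mono_exponent (ENNReal.one_le_ofReal.mpr hq.le))
  have hv1abs : Integrable (fun x => |v x|) μ := hv1.abs
  -- conjugate exponent
  set p : ℝ := q / (q - 1) with hp_def
  have hpq : p.HolderConjugate q := by
    refine ((Real.holderConjugate_iff_eq_conjExponent hq).2 ?_).symm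
    rw [hp_def]
  have hinvp : 1/p = 1 - 1/q := by
    have := hpq.inv_add_inv_eq_one
    rw [one_div, one_div]
    linarith
  -- Hölder on Aᶜ
  set f : X → ℝ := Set.indicator Aᶜ (fun _ => (1:ℝ)) with hf_def
  have hf_mem : MemLp f (ENNReal.ofReal p) μ :=
    memLp_indicator_const _ hA.compl 1 (Or.inr (measure_ne_top μ _))
  have hf_nonneg : 0 ≤ᵐ[μ] f := Filter.Eventually.of_forall fun x => by
    simp only [hf_def]
    exact Set.indicator_nonneg (fun _ _ => zero_le_one) x
  have habs_nonneg : 0 ≤ᵐ[μ] fun x => |v x| :=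
    Filter.Eventually.of_forall fun x => abs_nonneg _
  have holder := integral_mul_le_Lp_mul_Lq_of_nonneg hpq hf_nonneg habs_nonneg hf_mem hvabs
  have hfv : (∫ a, f a * |v a| ∂μ) = ∫ x in Aᶜ, |v x| ∂μ := by
    rw [← integral_indicator hA.compl]
    congr 1
    funext a
    by_cases ha : a ∈ Aᶜ <;> simp [hf_def, ha]
  have hfp : (∫ a, f a ^ p ∂μ) = (μ Aᶜ).toReal := by
    have : (fun a => f a ^ p) = f := by
      funext a
      by_cases ha : a ∈ Aᶜ <;>
        simp [hf_def, ha, Real.zero_rpow hpq.ne_zero]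
    rw [this, hf_def, integral_indicator_const _ hA.compl]
    simp
    rfl
  rw [hfv, hfp] at holder
  set I : ℝ := ∫ x, |v x| ^ q ∂μ with hI_def
  have hI0 : 0 ≤ I := integral_nonneg fun x => Real.rpow_nonneg (abs_nonneg _) q
  set N : ℝ := I ^ (1/q) with hN_def
  have hN0 : 0 ≤ N := Real.rpow_nonneg hI0 _
  set a : ℝ := (μ A).toReal with ha_def
  have ha_pos : 0 < a := lt_trans hε hAε
  have ha_le_m : a ≤ m :=
    ENNReal.toReal_mono (measure_ne_top μ _) (measure_mono (Set.subset_univ _))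
  have hAc : (μ Aᶜ).toReal = m - a := by
    rw [measure_compl hA (measure_ne_top μ _),
      ENNReal.toReal_sub_of_le (measure_mono (Set.subset_univ _)) (measure_ne_top μ _)]
  rw [hAc, hinvp] at holder
  -- bound the compl term
  have hstep : (m - a) ^ (1 - 1/q) ≤ (m - ε') ^ (1 - 1/q) :=
    Real.rpow_le_rpow (by linarith) (by linarith [hε'le, hAε]) hexp.le
  have hθ_eq : (m - ε') ^ (1 - 1/q) * m ^ (1/q - 1) = θ := by
    have h2 : m ^ (1/q - 1) * m ^ (1 - 1/q) = 1 := by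
      rw [← Real.rpow_add hm]
      norm_num
    rw [hθ_def, Real.div_rpow (by linarith) hm.le,
      eq_div_iff (Real.rpow_pos_of_pos hm (1 - 1/q)).ne', mul_assoc, h2, mul_one]
  have hmq_pos : 0 < m ^ (1/q - 1) := Real.rpow_pos_of_pos hm _
  have hcompl : m ^ (1/q - 1) * ∫ x in Aᶜ, |v x| ∂μ ≤ θ * N := by
    calc m ^ (1/q - 1) * ∫ x in Aᶜ, |v x| ∂μ
        ≤ m ^ (1/q - 1) * ((m - a) ^ (1 - 1/q) * N) := by
          exact mul_le_mul_of_nonneg_left holder hmq_pos.le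
      _ ≤ m ^ (1/q - 1) * ((m - ε') ^ (1 - 1/q) * N) := by
          have := mul_le_mul_of_nonneg_right hstep hN0
          exact mul_le_mul_of_nonneg_left this hmq_pos.le
      _ = θ * N := by rw [← hθ_eq]; ring
  -- split integral
  have hsplit : (∫ x, |v x| ∂μ) = (∫ x in A, |v x| ∂μ) + ∫ x in Aᶜ, |v x| ∂μ :=
    (integral_add_compl hA hv1abs).symm
  have hIA : 0 ≤ ∫ x in A, |v x| ∂μ :=
    setIntegral_nonneg hA fun x _ => abs_nonneg _
  have key : N ≤ C₁ * G + m ^ (1/q - 1) * ∫ x in A, |v x| ∂μ + θ * N := by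
    calc N ≤ C₁ * G + m ^ (1/q - 1) * ∫ x, |v x| ∂μ := hP
      _ = C₁ * G + m ^ (1/q - 1) * ∫ x in A, |v x| ∂μ
          + m ^ (1/q - 1) * ∫ x in Aᶜ, |v x| ∂μ := by rw [hsplit]; ring
      _ ≤ C₁ * G + m ^ (1/q - 1) * ∫ x in A, |v x| ∂μ + θ * N := by linarith [hcompl]
  -- bound m^{1/q-1} * a ≤ m^{1/q}
  have hma : m ^ (1/q - 1) * a ≤ m ^ (1/q) := by
    have : m ^ (1/q - 1) * m = m ^ (1/q) := by
      nth_rewrite 2 [← Real.rpow_one m]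
      rw [← Real.rpow_add hm]
      norm_num
    calc m ^ (1/q - 1) * a ≤ m ^ (1/q - 1) * m :=
          mul_le_mul_of_nonneg_left ha_le_m hmq_pos.le
      _ = m ^ (1/q) := this
  -- finish
  set t : ℝ := a⁻¹ * ∫ x in A, |v x| ∂μ with ht_def
  have ht0 : 0 ≤ t := mul_nonneg (inv_nonneg.mpr ha_pos.le) hIA
  have hIA_eq : m ^ (1/q - 1) * ∫ x in A, |v x| ∂μ = (m ^ (1/q - 1) * a) * t := by
    rw [ht_def]
    field_simp
  have h1θ : 0 < 1 - θ := by linarith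
  have key2 : (1 - θ) * N ≤ C₁ * G + (m ^ (1/q - 1) * a) * t := by
    rw [← hIA_eq]; linarith
  have key3 : (1 - θ) * N ≤ (C₁ + m ^ (1/q) + 1) * (G + t) := by
    have h1 : (m ^ (1/q - 1) * a) * t ≤ m ^ (1/q) * t :=
      mul_le_mul_of_nonneg_right hma ht0
    have h2 : C₁ * G ≤ (C₁ + m ^ (1/q) + 1) * G := by
      apply mul_le_mul_of_nonneg_right _ hG
      have : 0 ≤ m ^ (1/q) := (Real.rpow_pos_of_pos hm _).le
      linarith
    have h3 : m ^ (1/q) * t ≤ (C₁ + m ^ (1/q) + 1) * t := by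
      apply mul_le_mul_of_nonneg_right _ ht0
      linarith
    have h4 : (C₁ + m ^ (1/q) + 1) * (G + t)
        = (C₁ + m ^ (1/q) + 1) * G + (C₁ + m ^ (1/q) + 1) * t := by ring
    linarith [key2]
  calc N ≤ ((C₁ + m ^ (1/q) + 1) * (G + t)) / (1 - θ) := by
        rw [le_div_iff₀ h1θ]
        have hcomm : N * (1 - θ) = (1 - θ) * N := mul_comm _ _
        linarith [key3]
    _ = (1 - θ)⁻¹ * (C₁ + m ^ (1/q) + 1) * (G + t) := by
        field_simp
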